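/- Let A = 𝔽₂[b_1, b_2, b_3, ...] be a polynomial algebra with one generator b_i in each positive degree i, and let Q be the 𝔽₂-linear derivation on A determined by Q(b_{2k}) = b_{2k+1-2^{n+1}} when 2k ≥ 2^{n+1}, Q(b_{2k}) = 0 when 2k < 2^{n+1}, and Q(b_{odd}) determined so that Q(b_{2i+1}) pairs with b_{2i+2^{n+1}} (i.e., Q(b_{2i+2^{n+1}}) = b_{2i+1} and Q(b_{2i+1}) = 0). Then the homology of A with respect to the differential Q (which satisfies Q² = 0) is the polynomial algebra 𝔽₂[b_2, b_4, ..., b_{2^{n+1}-2}] ⊗ 𝔽₂[b_{2i}² : i ≥ 2^n]. -/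

import Mathlib

open MvPolynomial

noncomputable section

/-- The polynomial algebra `A = 𝔽₂[b_1, b_2, b_3, ...]`. -/
abbrev A2 : Type := MvPolynomial {i : ℕ // 0 < i} (ZMod 2)

/-- The generator `b_i` (for `i ≥ 1`). -/
def bb (i : ℕ) : A2 := if h : 0 < i then X ⟨i, h⟩ else 0

abbrev VV : Type := {i : ℕ // 0 < i}

lemma monomial_family_indep {ι : Type} (w : ι → VV) (c : ι → ℕ)
    (hw : Function.Injective w) (hc : ∀ i, c i ≠ 0) :
    AlgebraicIndependent (ZMod 2)
      (fun i => (monomial (Finsupp.single (w i) (c i)) 1 : A2)) := by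
  classical
  rw [algebraicIndependent_iff]
  intro p hp
  set T : (ι →₀ ℕ) → (VV →₀ ℕ) :=
    fun b => b.sum (fun i k => Finsupp.single (w i) (k * c i)) with hT
  have hTapp : ∀ (b : ι →₀ ℕ) (j : ι), T b (w j) = b j * c j := by
    intro b j
    rw [hT]
    simp only [Finsupp.sum_apply]
    rw [Finsupp.sum]
    rw [Finset.sum_eq_single j]
    · simp [Finsupp.single_apply]
    · intro i _ hij
      simp [Finsupp.single_apply, fun h => hij (hw h)]
      intro h; exact absurd (hw h) hij
    · intro hj
      simp [Finsupp.notMem_support_iff.mp hj]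
  have hTinj : Function.Injective T := by
    intro b b' hbb
    ext j
    have := congrArg (fun f => f (w j)) hbb
    simp only [hTapp] at this
    exact Nat.eq_of_mul_eq_mul_right (Nat.pos_of_ne_zero (hc j)) this
  have key : ∀ (b : ι →₀ ℕ) (r : ZMod 2),
      aeval (fun i => (monomial (Finsupp.single (w i) (c i)) 1 : A2)) (monomial b r)
        = monomial (T b) r := by
    intro b r
    rw [aeval_monomial, hT]
    rw [monomial_finsupp_sum_index]
    congr 1
    apply Finsupp.prod_congr
    intro i hi
    rw [monomial_pow, one_pow, Finsupp.smul_single, smul_eq_mul, mul_comm (b i) (c i)]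
  -- now conclude p = 0
  have hps : aeval (fun i => (monomial (Finsupp.single (w i) (c i)) 1 : A2)) p
      = ∑ b ∈ p.support, monomial (T b) (coeff b p) := by
    conv_lhs => rw [p.as_sum]
    rw [map_sum]
    exact Finset.sum_congr rfl fun b _ => key b _
  by_contra hp0
  obtain ⟨b0, hb0⟩ : ∃ b0, b0 ∈ p.support := by
    rcases Finset.eq_empty_or_nonempty p.support with h | h
    · exact absurd (by simpa using h) hp0
    · exact h
  have : coeff (T b0) (aeval (fun i => (monomial (Finsupp.single (w i) (c i)) 1 : A2)) p)
      = coeff b0 p := by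
    rw [hps, coeff_sum]
    rw [Finset.sum_eq_single b0]
    · simp [coeff_monomial]
    · intro b _ hb
      rw [coeff_monomial, if_neg (fun h => hb (hTinj h))]
    · intro h; exact absurd hb0 h
  rw [hp, coeff_zero] at this
  exact (MvPolynomial.mem_support_iff.mp hb0) this.symm

lemma bb_eq_monomial {i : ℕ} (h : 0 < i) :
    bb i = monomial (Finsupp.single (⟨i, h⟩ : VV) 1) 1 := by
  rw [bb, dif_pos h, ← X_pow_eq_monomial, pow_one]

lemma bb_sq_eq_monomial {i : ℕ} (h : 0 < i) :
    bb i ^ 2 = monomial (Finsupp.single (⟨i, h⟩ : VV) 2) 1 := by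
  rw [bb, dif_pos h, X_pow_eq_monomial]

lemma part1 (n : ℕ) :
    AlgebraicIndependent (ZMod 2)
      ((↑) : ((fun i => bb (2 * i)) '' {i | 0 < i ∧ i < 2 ^ n} ∪
              (fun i => bb (2 * i) ^ 2) '' {i | 2 ^ n ≤ i} : Set A2) → A2) := by
  classical
  set g : ℕ → A2 := fun i => if i < 2 ^ n then bb (2 * i) else bb (2 * i) ^ 2 with hg
  have hset : ((fun i => bb (2 * i)) '' {i | 0 < i ∧ i < 2 ^ n} ∪
              (fun i => bb (2 * i) ^ 2) '' {i | 2 ^ n ≤ i} : Set A2)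
      = g '' {i | 0 < i} := by
    ext x
    simp only [Set.mem_union, Set.mem_image, Set.mem_setOf_eq, hg]
    constructor
    · rintro (⟨i, ⟨h1, h2⟩, rfl⟩ | ⟨i, h1, rfl⟩)
      · exact ⟨i, h1, by rw [if_pos h2]⟩
      · refine ⟨i, by have := Nat.one_le_two_pow (n := n); omega, by rw [if_neg (by omega)]⟩
    · rintro ⟨i, h1, rfl⟩
      by_cases h2 : i < 2 ^ n
      · exact Or.inl ⟨i, ⟨h1, h2⟩, (if_pos h2).symm⟩
      · exact Or.inr ⟨i, by omega, (if_neg h2).symm⟩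
  rw [hset]
  apply AlgebraicIndependent.image
  have h2i : ∀ x : {i : ℕ | 0 < i}, 0 < 2 * (x : ℕ) := fun x => by
    have := x.2; simp only [Set.mem_setOf_eq] at this; omega
  have : (fun x : {i : ℕ | 0 < i} => g x) = fun x =>
      monomial (Finsupp.single ((fun y : {i : ℕ | 0 < i} => (⟨2 * (y : ℕ), h2i y⟩ : VV)) x)
        ((fun y : {i : ℕ | 0 < i} => if (y : ℕ) < 2 ^ n then 1 else 2) x)) 1 := by
    funext x
    by_cases h : (x : ℕ) < 2 ^ n
    · simp only [hg, if_pos h, bb_eq_monomial (h2i x)]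
    · simp only [hg, if_neg h, bb_sq_eq_monomial (h2i x)]
  rw [this]
  apply monomial_family_indep
  · intro x y hxy
    simp only [Subtype.mk.injEq] at hxy
    exact Subtype.ext (by omega)
  · intro x; split <;> omega

section Der
variable (Q : A2 →ₗ[ZMod 2] A2) (hder : ∀ x y : A2, Q (x * y) = Q x * y + x * Q y)

lemma char2_add_self (x : A2) : x + x = 0 := by
  calc x + x = ((1 : ZMod 2) + 1) • x := by rw [add_smul, one_smul]
  _ = (0 : ZMod 2) • x := by rw [show (1:ZMod 2)+1 = 0 by decide]
  _ = 0 := zero_smul _ _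

include hder in
lemma Q_one : Q 1 = 0 := by
  have h := hder 1 1
  simp only [mul_one, one_mul] at h
  have := char2_add_self (Q 1)
  -- h : Q 1 = Q 1 + Q 1
  rw [this] at h
  exact h

include hder in
lemma Q_pow (x : A2) (k : ℕ) : Q (x ^ k) = k • (x ^ (k - 1) * Q x) := by
  induction k with
  | zero => simpa using Q_one Q hder
  | succ k ih =>
    rw [pow_succ, hder, ih]
    cases k with
    | zero => simp
    | succ m =>
      have e : x ^ m * Q x * x = x ^ (m+1) * Q x := by ring
      simp only [Nat.add_sub_cancel]
      rw [smul_mul_assoc, e, succ_nsmul]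
      rw [show m + 1 + 1 = m + 2 by omega, add_nsmul, two_nsmul, add_assoc]

lemma finsupp_aux1 (v : VV) (k : ℕ) (f : VV →₀ ℕ) (hv : f v = 0) :
    (Finsupp.single v k + f) - Finsupp.single v 1 = Finsupp.single v (k - 1) + f := by
  ext u
  simp only [Finsupp.tsub_apply, Finsupp.add_apply, Finsupp.single_apply]
  by_cases h : v = u
  · subst h; simp [hv]
  · simp [h]

lemma finsupp_aux2 (v w : VV) (k : ℕ) (f : VV →₀ ℕ) (hvw : w ≠ v) :
    (Finsupp.single v k + f) - Finsupp.single w 1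
      = Finsupp.single v k + (f - Finsupp.single w 1) := by
  ext u
  simp only [Finsupp.tsub_apply, Finsupp.add_apply, Finsupp.single_apply]
  by_cases h : v = u
  · subst h; rw [if_neg (fun hh => hvw hh)]; omega
  · simp [h]

include hder in
lemma ML0 (a : VV →₀ ℕ) :
    Q (monomial a 1) = ∑ v ∈ a.support,
      a v • (monomial (a - Finsupp.single v 1) 1 * Q (X v)) := by
  induction a using Finsupp.induction with
  | zero => simpa using Q_one Q hder
  | single_add v k f hvf hk ih =>
    have hfv : f v = 0 := Finsupp.notMem_support_iff.mp hvf
    rw [monomial_single_add, hder, Q_pow Q hder, ih]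
    have hsupp : (Finsupp.single v k + f).support = insert v f.support := by
      rw [Finsupp.support_add_eq, Finsupp.support_single_ne_zero v hk,
        show ({v} : Finset VV) ∪ f.support = insert v f.support from rfl]
      simp [Finsupp.support_single_ne_zero v hk, Finset.disjoint_singleton_left, hvf]
    rw [hsupp, Finset.sum_insert hvf]
    congr 1
    · have hc : (Finsupp.single v k + f) v = k := by
        simp [Finsupp.add_apply, hfv]
      rw [hc, finsupp_aux1 v k f hfv, monomial_single_add, smul_mul_assoc]
      refine congrArg (k • ·) ?_
      ring
    · rw [Finset.mul_sum]
      refine Finset.sum_congr rfl fun w hw => ?_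
      have hwv : w ≠ v := fun h => hvf (h ▸ hw)
      have hc : (Finsupp.single v k + f) w = f w := by
        rw [Finsupp.add_apply, Finsupp.single_apply, if_neg (fun h : v = w => hwv h.symm),
          zero_add]
      rw [hc, finsupp_aux2 v w k f hwv, monomial_single_add, mul_smul_comm]
      congr 1
      ring

lemma nat_smul_char2 (k : ℕ) (x : A2) : k • x = if Odd k then x else 0 := by
  rw [← Nat.cast_smul_eq_nsmul (ZMod 2)]
  have h2 : ((k % 2 : ℕ) : ZMod 2) = (k : ZMod 2) := ZMod.natCast_mod k 2
  rcases Nat.even_or_odd k with hk | hk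
  · rw [if_neg (Nat.not_odd_iff_even.mpr hk)]
    have : (k : ZMod 2) = 0 := (ZMod.natCast_eq_zero_iff k 2).mpr hk.two_dvd
    rw [this, zero_smul]
  · rw [if_pos hk]
    have hm : k % 2 = 1 := Nat.odd_iff.mp hk
    rw [← h2, hm]
    norm_num

def ptv (n : ℕ) (v : VV) : VV := ⟨max 1 (v.val + 1 - 2^(n+1)), by omega⟩

/-- The term of `Q` on the monomial `a` corresponding to variable `v`. -/
def QT (n : ℕ) (a : VV →₀ ℕ) (v : VV) : A2 :=
  if 2^(n+1) ≤ v.val ∧ Even v.val ∧ Odd (a v)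
  then monomial (a - Finsupp.single v 1 + Finsupp.single (ptv n v) 1) 1 else 0

section Der2
variable (n : ℕ)
  (heven : ∀ k : ℕ, 0 < k →
      Q (bb (2 * k)) =
        if 2 ^ (n + 1) ≤ 2 * k then bb (2 * k + 1 - 2 ^ (n + 1)) else 0)
  (hodd : ∀ k : ℕ, Q (bb (2 * k + 1)) = 0)

include heven hodd in
lemma QX (v : VV) :
    Q (X v) = if 2^(n+1) ≤ v.val ∧ Even v.val then X (ptv n v) else 0 := by
  rcases Nat.even_or_odd v.val with he | ho
  · obtain ⟨k, hk⟩ := he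
    have hk' : v.val = 2 * k := by omega
    have hkpos : 0 < k := by have := v.2; omega
    have hX : bb (2 * k) = X v := by
      rw [bb, dif_pos (by omega)]
      congr 1
      exact Subtype.ext hk'.symm
    have := heven k hkpos
    rw [hX] at this
    rw [this]
    by_cases hN : 2 ^ (n+1) ≤ 2 * k
    · rw [if_pos hN, if_pos ⟨by omega, by rw [hk']; exact even_two_mul k⟩]
      have hpos : 0 < 2 * k + 1 - 2^(n+1) := by
        have : 2 ≤ 2^(n+1) := by
          calc 2 = 2^1 := (pow_one 2).symm
          _ ≤ 2^(n+1) := Nat.pow_le_pow_right (by norm_num) (by omega)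
        omega
      rw [bb, dif_pos hpos]
      congr 1
      apply Subtype.ext
      show 2 * k + 1 - 2^(n+1) = max 1 (v.val + 1 - 2^(n+1))
      omega
    · rw [if_neg hN, if_neg (by rw [hk']; exact fun h => hN h.1)]
  · obtain ⟨k, hk⟩ := ho
    have hX : bb (2 * k + 1) = X v := by
      rw [bb, dif_pos (by omega)]
      congr 1
      exact Subtype.ext hk.symm
    rw [← hX, hodd k, if_neg (by rw [hk]; rintro ⟨-, h⟩; simp [Nat.even_add_one, Nat.even_mul] at h)]

include hder heven hodd in
lemma ML (a : VV →₀ ℕ) (s : Finset VV) (hs : a.support ⊆ s) :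
    Q (monomial a 1) = ∑ v ∈ s, QT n a v := by
  rw [ML0 Q hder]
  rw [Finset.sum_subset hs (fun v _ hv => by
    rw [Finsupp.notMem_support_iff.mp hv, zero_smul])]
  refine Finset.sum_congr rfl fun v _ => ?_
  rw [QX (heven := heven) (hodd := hodd) (v := v), QT]
  by_cases h : 2^(n+1) ≤ v.val ∧ Even v.val
  · rw [if_pos h]
    have : (monomial (a - Finsupp.single v 1)) (1 : ZMod 2) * X (ptv n v)
        = monomial (a - Finsupp.single v 1 + Finsupp.single (ptv n v) 1) 1 := by
      rw [X, monomial_mul, mul_one]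
    rw [this, nat_smul_char2]
    by_cases ho : Odd (a v)
    · rw [if_pos ho, if_pos ⟨h.1, h.2, ho⟩]
    · rw [if_neg ho, if_neg (fun hh => ho hh.2.2)]
  · rw [if_neg h, mul_zero, smul_zero, if_neg (fun hh => h ⟨hh.1, hh.2.1⟩)]

end Der2
end Der

section Pairs
variable (n : ℕ)

def Ev (j : ℕ) : VV := ⟨2^(n+1) + 2*j, by positivity⟩
def Od (j : ℕ) : VV := ⟨2*j+1, by omega⟩

lemma two_pow_succ_even : (2:ℕ)^(n+1) = 2 * 2^n := by rw [pow_succ, mul_comm]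

lemma Ev_ne_Od (j k : ℕ) : Ev n j ≠ Od k := by
  have h := two_pow_succ_even n
  intro h'
  have := congrArg Subtype.val h'
  simp only [Ev, Od] at this
  omega

lemma Ev_inj {j k : ℕ} (h : Ev n j = Ev n k) : j = k := by
  have := congrArg Subtype.val h
  simp only [Ev] at this
  omega

lemma Od_inj {j k : ℕ} (h : Od j = Od k) : j = k := by
  have := congrArg Subtype.val h
  simp only [Od] at this
  omega

lemma cond_iff_Ev (v : VV) : (2^(n+1) ≤ v.val ∧ Even v.val) ↔ ∃ j, v = Ev n j := by
  have h := two_pow_succ_even n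
  constructor
  · rintro ⟨h1, k, hk⟩
    refine ⟨(v.val - 2^(n+1))/2, Subtype.ext ?_⟩
    simp only [Ev]
    omega
  · rintro ⟨j, rfl⟩
    exact ⟨by simp [Ev], ⟨2^n + j, by simp [Ev]; omega⟩⟩

lemma ptv_Ev (j : ℕ) : ptv n (Ev n j) = Od j := by
  apply Subtype.ext
  have h := two_pow_succ_even n
  simp only [ptv, Ev, Od]
  omega

/-- pair `j` is "bad" in exponent `a`. -/
def bad (a : VV →₀ ℕ) (j : ℕ) : Prop := a (Od j) ≠ 0 ∨ Odd (a (Ev n j))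

def Red (a : VV →₀ ℕ) : Prop := ∀ j, ¬ bad n a j

/-- `a ↦ a - e_j + o_j`  (the exponent of a summand of `Q`) -/
def Da (j : ℕ) (a : VV →₀ ℕ) : VV →₀ ℕ :=
  a - Finsupp.single (Ev n j) 1 + Finsupp.single (Od j) 1

/-- `a ↦ a + e_j - o_j`  (the exponent of the homotopy) -/
def Ua (j : ℕ) (a : VV →₀ ℕ) : VV →₀ ℕ :=
  a + Finsupp.single (Ev n j) 1 - Finsupp.single (Od j) 1

lemma Da_apply (j : ℕ) (a : VV →₀ ℕ) (v : VV) :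
    Da n j a v = a v - (if Ev n j = v then 1 else 0) + (if Od j = v then 1 else 0) := by
  simp [Da, Finsupp.tsub_apply, Finsupp.add_apply, Finsupp.single_apply]

lemma Ua_apply (j : ℕ) (a : VV →₀ ℕ) (v : VV) :
    Ua n j a v = a v + (if Ev n j = v then 1 else 0) - (if Od j = v then 1 else 0) := by
  simp [Ua, Finsupp.tsub_apply, Finsupp.add_apply, Finsupp.single_apply]

@[simp] lemma Ev_val (j : ℕ) : (Ev n j).val = 2^(n+1) + 2*j := rfl
@[simp] lemma Od_val (j : ℕ) : (Od j).val = 2*j + 1 := rfl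

lemma veq (u w : VV) : (u = w) ↔ (u.val = w.val) := Subtype.ext_iff

lemma Da_apply_Ev (j : ℕ) (a : VV →₀ ℕ) : Da n j a (Ev n j) = a (Ev n j) - 1 := by
  have hpow := two_pow_succ_even n
  rw [Da_apply]; simp only [veq, Ev_val, Od_val]; split_ifs <;> omega

lemma Da_apply_Od (j : ℕ) (a : VV →₀ ℕ) : Da n j a (Od j) = a (Od j) + 1 := by
  have hpow := two_pow_succ_even n
  rw [Da_apply]; simp only [veq, Ev_val, Od_val]; split_ifs <;> omega

lemma Ua_apply_Ev (j : ℕ) (a : VV →₀ ℕ) : Ua n j a (Ev n j) = a (Ev n j) + 1 := by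
  have hpow := two_pow_succ_even n
  rw [Ua_apply]; simp only [veq, Ev_val, Od_val]; split_ifs <;> omega

lemma Ua_apply_Od (j : ℕ) (a : VV →₀ ℕ) : Ua n j a (Od j) = a (Od j) - 1 := by
  have hpow := two_pow_succ_even n
  rw [Ua_apply]; simp only [veq, Ev_val, Od_val]; split_ifs <;> omega

lemma Da_apply_ne (j : ℕ) (a : VV →₀ ℕ) (v : VV) (h1 : v ≠ Ev n j) (h2 : v ≠ Od j) :
    Da n j a v = a v := by
  rw [Da_apply, if_neg (fun h => h1 h.symm), if_neg (fun h => h2 h.symm)]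
  omega

lemma Ua_apply_ne (j : ℕ) (a : VV →₀ ℕ) (v : VV) (h1 : v ≠ Ev n j) (h2 : v ≠ Od j) :
    Ua n j a v = a v := by
  rw [Ua_apply, if_neg (fun h => h1 h.symm), if_neg (fun h => h2 h.symm)]
  omega

lemma bad_Da_iff (j i : ℕ) (a : VV →₀ ℕ) (hij : i ≠ j) :
    bad n (Da n j a) i ↔ bad n a i := by
  have hpow := two_pow_succ_even n
  rw [bad, bad, Da_apply_ne n j a (Ev n i) (by simp only [Ne, veq, Ev_val, Od_val]; omega)
      (by simp only [Ne, veq, Ev_val, Od_val]; omega),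
    Da_apply_ne n j a (Od i) (by simp only [Ne, veq, Ev_val, Od_val]; omega)
      (by simp only [Ne, veq, Ev_val, Od_val]; omega)]

lemma bad_Ua_iff (j i : ℕ) (a : VV →₀ ℕ) (hij : i ≠ j) :
    bad n (Ua n j a) i ↔ bad n a i := by
  have hpow := two_pow_succ_even n
  rw [bad, bad, Ua_apply_ne n j a (Ev n i) (by simp only [Ne, veq, Ev_val, Od_val]; omega)
      (by simp only [Ne, veq, Ev_val, Od_val]; omega),
    Ua_apply_ne n j a (Od i) (by simp only [Ne, veq, Ev_val, Od_val]; omega)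
      (by simp only [Ne, veq, Ev_val, Od_val]; omega)]

lemma bad_Da_self (j : ℕ) (a : VV →₀ ℕ) : bad n (Da n j a) j :=
  Or.inl (by rw [Da_apply_Od]; omega)

lemma Da_Ua (j : ℕ) (a : VV →₀ ℕ) (h : a (Od j) ≠ 0) : Da n j (Ua n j a) = a := by
  have hpow := two_pow_succ_even n
  ext v
  rw [Da_apply, Ua_apply]
  have h1 : (Od j) = v → a v ≠ 0 := fun hh => hh ▸ h
  simp only [veq, Ev_val, Od_val] at h1 ⊢
  split_ifs <;> omega

lemma Ua_Da (j : ℕ) (a : VV →₀ ℕ) (h : a (Ev n j) ≠ 0) : Ua n j (Da n j a) = a := by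
  have hpow := two_pow_succ_even n
  ext v
  rw [Ua_apply, Da_apply]
  have h1 : (Ev n j) = v → a v ≠ 0 := fun hh => hh ▸ h
  simp only [veq, Ev_val, Od_val] at h1 ⊢
  split_ifs <;> omega

lemma Ua_Da_comm (j k : ℕ) (a : VV →₀ ℕ) (hjk : j ≠ k) :
    Ua n k (Da n j a) = Da n j (Ua n k a) := by
  have hpow := two_pow_succ_even n
  ext v
  rw [Ua_apply, Da_apply, Da_apply, Ua_apply]
  simp only [veq, Ev_val, Od_val]
  split_ifs <;> omega

lemma QT_Ev (a : VV →₀ ℕ) (j : ℕ) :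
    QT n a (Ev n j) = if Odd (a (Ev n j)) then monomial (Da n j a) 1 else 0 := by
  have hcond : 2^(n+1) ≤ (Ev n j).val ∧ Even (Ev n j).val :=
    (cond_iff_Ev n (Ev n j)).mpr ⟨j, rfl⟩
  rw [QT, ptv_Ev]
  by_cases ho : Odd (a (Ev n j))
  · rw [if_pos ⟨hcond.1, hcond.2, ho⟩, if_pos ho]; rfl
  · rw [if_neg (fun h => ho h.2.2), if_neg ho]

lemma QT_not_Ev (a : VV →₀ ℕ) (v : VV) (h : ∀ j, v ≠ Ev n j) : QT n a v = 0 := by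
  rw [QT, if_neg]
  rintro ⟨h1, h2, -⟩
  obtain ⟨j, rfl⟩ := (cond_iff_Ev n v).mp ⟨h1, h2⟩
  exact h j rfl

open Classical in
/-- value of the contracting homotopy on the monomial with exponent `a` -/
def Hm (a : VV →₀ ℕ) : A2 :=
  if h : ∃ j, bad n a j then
    if Even (a (Ev n (Nat.find h)))
    then monomial (Ua n (Nat.find h) a) 1
    else 0
  else 0

open Classical in
/-- value of the projection onto reduced monomials -/
def Pm (a : VV →₀ ℕ) : A2 := if Red n a then monomial a 1 else 0

lemma Pm_red {a : VV →₀ ℕ} (h : Red n a) : Pm n a = monomial a 1 := by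
  rw [Pm, if_pos h]

lemma Pm_not_red {a : VV →₀ ℕ} (h : ¬ Red n a) : Pm n a = 0 := by
  rw [Pm, if_neg h]

lemma Hm_red {a : VV →₀ ℕ} (h : Red n a) : Hm n a = 0 := by
  rw [Hm, dif_neg]
  rintro ⟨j, hj⟩
  exact h j hj

section MinBad
variable {a : VV →₀ ℕ} {k : ℕ} (hk : bad n a k) (hmin : ∀ i, i < k → ¬ bad n a i)

include hk hmin

lemma not_red : ¬ Red n a := fun h => h k hk

open Classical in
lemma find_eq : Nat.find (⟨k, hk⟩ : ∃ j, bad n a j) = k := by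
  rw [Nat.find_eq_iff]
  exact ⟨hk, hmin⟩

lemma Hm_eq_of_odd (ho : Odd (a (Ev n k))) : Hm n a = 0 := by
  rw [Hm, dif_pos ⟨k, hk⟩]
  rw [find_eq n hk hmin, if_neg (by rw [Nat.even_iff, Nat.odd_iff.mp ho]; norm_num)]

lemma Hm_eq_of_even (he : Even (a (Ev n k))) : Hm n a = monomial (Ua n k a) 1 := by
  rw [Hm, dif_pos ⟨k, hk⟩]
  rw [find_eq n hk hmin, if_pos he]

lemma Hm_Da_self (ho : Odd (a (Ev n k))) : Hm n (Da n k a) = monomial a 1 := by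
  have hbad : bad n (Da n k a) k := bad_Da_self n k a
  have hmin' : ∀ i, i < k → ¬ bad n (Da n k a) i := fun i hi => by
    rw [bad_Da_iff n k i a (Nat.ne_of_lt hi)]
    exact hmin i hi
  have heven : Even ((Da n k a) (Ev n k)) := by
    rw [Da_apply_Ev]
    exact Nat.Odd.sub_odd ho odd_one
  rw [Hm_eq_of_even n hbad hmin' heven, Ua_Da n k a (by rintro h0; rw [h0] at ho; simp at ho)]

lemma Hm_Da_other (j : ℕ) (hj : j ≠ k) (hoj : Odd (a (Ev n j)))
    (ho : Odd (a (Ev n k))) : Hm n (Da n j a) = 0 := by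
  have hbadj : bad n a j := Or.inr hoj
  have hkj : k < j := by
    rcases Nat.lt_or_ge k j with h | h
    · exact h
    · rcases Nat.eq_or_lt_of_le h with h' | h'
      · omega
      · exact absurd hbadj (hmin j (by omega))
  have hbad : bad n (Da n j a) k := (bad_Da_iff n j k a (by omega)).mpr hk
  have hmin' : ∀ i, i < k → ¬ bad n (Da n j a) i := fun i hi => by
    rw [bad_Da_iff n j i a (by omega)]
    exact hmin i hi
  apply Hm_eq_of_odd n hbad hmin'
  rwa [Da_apply_ne n j a (Ev n k)
    (by simp only [Ne, veq, Ev_val]; omega)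
    (by have := two_pow_succ_even n; simp only [Ne, veq, Ev_val, Od_val]; omega)]

lemma Hm_Da_even (j : ℕ) (hj : j ≠ k) (hoj : Odd (a (Ev n j)))
    (he : Even (a (Ev n k))) : Hm n (Da n j a) = monomial (Ua n k (Da n j a)) 1 := by
  have hbadj : bad n a j := Or.inr hoj
  have hkj : k < j := by
    rcases Nat.lt_or_ge k j with h | h
    · exact h
    · rcases Nat.eq_or_lt_of_le h with h' | h'
      · omega
      · exact absurd hbadj (hmin j (by omega))
  have hbad : bad n (Da n j a) k := (bad_Da_iff n j k a (by omega)).mpr hk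
  have hmin' : ∀ i, i < k → ¬ bad n (Da n j a) i := fun i hi => by
    rw [bad_Da_iff n j i a (by omega)]
    exact hmin i hi
  apply Hm_eq_of_even n hbad hmin'
  rwa [Da_apply_ne n j a (Ev n k)
    (by simp only [Ne, veq, Ev_val]; omega)
    (by have := two_pow_succ_even n; simp only [Ne, veq, Ev_val, Od_val]; omega)]

end MinBad
end Pairs

section Maps
variable (n : ℕ)

def HHm : A2 →ₗ[ZMod 2] A2 :=
  (basisMonomials VV (ZMod 2)).constr ℕ (Hm n)

def PPm : A2 →ₗ[ZMod 2] A2 :=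
  (basisMonomials VV (ZMod 2)).constr ℕ (Pm n)

lemma HHm_mono (a : VV →₀ ℕ) : HHm n (monomial a 1) = Hm n a := by
  have : (monomial a 1 : A2) = basisMonomials VV (ZMod 2) a := by
    rw [coe_basisMonomials]
  rw [this, HHm, Module.Basis.constr_basis]

lemma PPm_mono (a : VV →₀ ℕ) : PPm n (monomial a 1) = Pm n a := by
  have : (monomial a 1 : A2) = basisMonomials VV (ZMod 2) a := by
    rw [coe_basisMonomials]
  rw [this, PPm, Module.Basis.constr_basis]

end Maps

section Homotopy
variable (n : ℕ) (Q : A2 →ₗ[ZMod 2] A2)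
  (hder : ∀ x y : A2, Q (x * y) = Q x * y + x * Q y)
  (heven : ∀ k : ℕ, 0 < k →
      Q (bb (2 * k)) =
        if 2 ^ (n + 1) ≤ 2 * k then bb (2 * k + 1 - 2 ^ (n + 1)) else 0)
  (hodd : ∀ k : ℕ, Q (bb (2 * k + 1)) = 0)

lemma HQT_Ev (a : VV →₀ ℕ) (j : ℕ) :
    HHm n (QT n a (Ev n j)) = if Odd (a (Ev n j)) then Hm n (Da n j a) else 0 := by
  rw [QT_Ev]
  by_cases ho : Odd (a (Ev n j))
  · rw [if_pos ho, if_pos ho, HHm_mono]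
  · rw [if_neg ho, if_neg ho, map_zero]

lemma PQT (a : VV →₀ ℕ) (v : VV) : PPm n (QT n a v) = 0 := by
  rw [QT]
  split_ifs with h
  · obtain ⟨j, rfl⟩ := (cond_iff_Ev n v).mp ⟨h.1, h.2.1⟩
    rw [ptv_Ev]
    have : a - Finsupp.single (Ev n j) 1 + Finsupp.single (Od j) 1 = Da n j a := rfl
    rw [this, PPm_mono, Pm_not_red]
    exact fun hRed => hRed j (bad_Da_self n j a)
  · exact map_zero _

include hder heven hodd in
lemma K2 (a : VV →₀ ℕ) :
    Q (HHm n (monomial a 1)) + HHm n (Q (monomial a 1)) + PPm n (monomial a 1)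
      = monomial a 1 := by
  by_cases hred : Red n a
  case pos =>
    -- reduced monomial: everything vanishes except the projection
    have hQ0 : Q (monomial a 1) = 0 := by
      rw [ML (Q := Q) (hder := hder) (n := n) (heven := heven) (hodd := hodd) a a.support (subset_refl _)]
      apply Finset.sum_eq_zero
      intro v _
      rw [QT, if_neg]
      rintro ⟨h1, h2, h3⟩
      obtain ⟨j, rfl⟩ := (cond_iff_Ev n v).mp ⟨h1, h2⟩
      exact hred j (Or.inr h3)
    rw [hQ0, map_zero, HHm_mono, Hm_red n hred, map_zero, PPm_mono, Pm_red n hred,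
      zero_add, zero_add]
  case neg =>
    have hex : ∃ j, bad n a j := by
      by_contra h
      push_neg at h
      exact hred (fun j => h j)
    classical
    set k := Nat.find hex with hkdef
    have hk : bad n a k := Nat.find_spec hex
    have hmin : ∀ i, i < k → ¬ bad n a i := fun i hi => Nat.find_min hex hi
    rw [PPm_mono, Pm_not_red n hred, add_zero]
    by_cases ho : Odd (a (Ev n k))
    case pos =>
      -- case B
      rw [HHm_mono, Hm_eq_of_odd n hk hmin ho, map_zero, zero_add]
      rw [ML (Q := Q) (hder := hder) (n := n) (heven := heven) (hodd := hodd) a a.support (subset_refl _), map_sum]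
      have hmem : Ev n k ∈ a.support := by
        rw [Finsupp.mem_support_iff]
        intro h0
        rw [h0] at ho
        simp at ho
      rw [Finset.sum_eq_single_of_mem (Ev n k) hmem]
      · rw [HQT_Ev, if_pos ho, Hm_Da_self n hk hmin ho]
      · intro v hv hvne
        by_cases hvE : ∃ j, v = Ev n j
        · obtain ⟨j, rfl⟩ := hvE
          have hjk : j ≠ k := fun h => hvne (h ▸ rfl)
          rw [HQT_Ev]
          split_ifs with hoj
          · exact Hm_Da_other n hk hmin j hjk hoj ho
          · rfl
        · push_neg at hvE
          rw [QT_not_Ev n a v hvE, map_zero]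
    case neg =>
      -- case C
      have he : Even (a (Ev n k)) := Nat.not_odd_iff_even.mp ho
      have hOd : a (Od k) ≠ 0 := by
        rcases hk with h | h
        · exact h
        · exact absurd h ho
      rw [HHm_mono, Hm_eq_of_even n hk hmin he]
      set s : Finset VV := a.support ∪ (Ua n k a).support ∪ {Ev n k} with hs
      have hsub1 : a.support ⊆ s := by
        intro v hv; rw [hs]; simp [hv]
      have hsub2 : (Ua n k a).support ⊆ s := by
        intro v hv; rw [hs]; simp [hv]
      have hmemE : Ev n k ∈ s := by rw [hs]; simp
      rw [ML (Q := Q) (hder := hder) (n := n) (heven := heven) (hodd := hodd) (Ua n k a) s hsub2,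
        ML (Q := Q) (hder := hder) (n := n) (heven := heven) (hodd := hodd) a s hsub1, map_sum]
      rw [← Finset.add_sum_erase s _ hmemE, ← Finset.add_sum_erase s _ hmemE]
      have h1 : QT n (Ua n k a) (Ev n k) = monomial a 1 := by
        rw [QT_Ev, if_pos (by rw [Ua_apply_Ev]; exact Even.add_one he), Da_Ua n k a hOd]
      have h2 : HHm n (QT n a (Ev n k)) = 0 := by
        rw [HQT_Ev, if_neg ho]
      have h3 : ∀ v ∈ s.erase (Ev n k), QT n (Ua n k a) v = HHm n (QT n a v) := by
        intro v hv
        have hvne : v ≠ Ev n k := Finset.ne_of_mem_erase hv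
        by_cases hvE : ∃ j, v = Ev n j
        · obtain ⟨j, rfl⟩ := hvE
          have hjk : j ≠ k := fun h => hvne (h ▸ rfl)
          have hval : Ua n k a (Ev n j) = a (Ev n j) := by
            apply Ua_apply_ne
            · simp only [Ne, veq, Ev_val]; omega
            · have := two_pow_succ_even n
              simp only [Ne, veq, Ev_val, Od_val]; omega
          rw [QT_Ev, HQT_Ev, hval]
          split_ifs with hoj
          · rw [Hm_Da_even n hk hmin j hjk hoj he, Ua_Da_comm n j k a hjk]
          · rfl
        · push_neg at hvE
          rw [QT_not_Ev n _ v hvE, QT_not_Ev n a v hvE, map_zero]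
      rw [h1, h2, Finset.sum_congr rfl h3, zero_add]
      rw [add_assoc, char2_add_self, add_zero]
end Homotopy

lemma bb_eq_monomial' {i : ℕ} (h : 0 < i) :
    bb i = monomial (Finsupp.single (⟨i, h⟩ : VV) 1) 1 := by
  rw [bb, dif_pos h, ← X_pow_eq_monomial, pow_one]

lemma bb_sq_eq_monomial' {i : ℕ} (h : 0 < i) :
    bb i ^ 2 = monomial (Finsupp.single (⟨i, h⟩ : VV) 2) 1 := by
  rw [bb, dif_pos h, X_pow_eq_monomial]

section Span
variable (n : ℕ)

def RedSet : Set A2 := {x | ∃ a, Red n a ∧ x = monomial a 1}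

def Rspan : Submodule (ZMod 2) A2 := Submodule.span (ZMod 2) (RedSet n)

def Sset : Set A2 :=
  (fun i => bb (2 * i)) '' {i | 0 < i ∧ i < 2 ^ n} ∪
  (fun i => bb (2 * i) ^ 2) '' {i | 2 ^ n ≤ i}

lemma Red_zero : Red n 0 := by
  intro j
  rw [bad]
  simp

lemma Red_add {a b : VV →₀ ℕ} (ha : Red n a) (hb : Red n b) : Red n (a + b) := by
  intro j
  have h1 := ha j
  have h2 := hb j
  rw [bad] at h1 h2 ⊢
  push_neg at h1 h2 ⊢
  rw [Finsupp.add_apply, Finsupp.add_apply, h1.1, h2.1, Nat.not_odd_iff_even] at *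
  exact ⟨rfl, Even.add h1.2 h2.2⟩

lemma one_mem_RedSet : (1 : A2) ∈ RedSet n :=
  ⟨0, Red_zero n, by rw [monomial_zero']; simp⟩

lemma Rspan_mul {x y : A2} (hx : x ∈ Rspan n) (hy : y ∈ Rspan n) : x * y ∈ Rspan n := by
  have hmul : Rspan n * Rspan n ≤ Rspan n := by
    rw [Rspan, Submodule.span_mul_span]
    apply Submodule.span_le.mpr
    rintro z ⟨u, hu, v, hv, rfl⟩
    obtain ⟨a, ha, rfl⟩ := hu
    obtain ⟨b, hb, rfl⟩ := hv
    apply Submodule.subset_span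
    exact ⟨a + b, Red_add n ha hb, by
      show (monomial a (1 : ZMod 2)) * monomial b 1 = monomial (a+b) 1
      rw [monomial_mul, one_mul]⟩
  exact hmul (Submodule.mul_mem_mul hx hy)

/-- the span of reduced monomials, as a subalgebra -/
def RsubAlg : Subalgebra (ZMod 2) A2 :=
  Submodule.toSubalgebra (Rspan n) (Submodule.subset_span (one_mem_RedSet n))
    (fun _ _ hx hy => Rspan_mul n hx hy)

lemma Red_single (v : VV) (c : ℕ) (hv : Even v.val)
    (hc : Even c ∨ ¬ 2^(n+1) ≤ v.val) : Red n (Finsupp.single v c) := by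
  intro j
  have hpow := two_pow_succ_even n
  rw [bad]
  push_neg
  constructor
  · rw [Finsupp.single_apply, if_neg]
    intro h
    have := congrArg Subtype.val h
    simp only [Od_val] at this
    obtain ⟨m, hm⟩ := hv
    omega
  · rw [Finsupp.single_apply]
    split_ifs with h
    · subst h
      rcases hc with hc | hc
      · exact Nat.not_odd_iff_even.mpr hc
      · exact absurd (by simp) hc
    · simp

lemma Sset_sub_Rspan : Sset n ⊆ Rspan n := by
  rintro x (⟨i, ⟨hi1, hi2⟩, rfl⟩ | ⟨i, hi, rfl⟩)
  · apply Submodule.subset_span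
    refine ⟨Finsupp.single ⟨2*i, by omega⟩ 1, ?_, bb_eq_monomial' (by omega)⟩
    apply Red_single
    · exact ⟨i, two_mul i⟩
    · right
      have hpow := two_pow_succ_even n
      show ¬ (2^(n+1) ≤ 2*i)
      omega
  · apply Submodule.subset_span
    have hi' : 2^n ≤ i := hi
    have hi0 : 0 < 2*i := by have := Nat.one_le_two_pow (n := n); omega
    refine ⟨Finsupp.single ⟨2*i, hi0⟩ 2, ?_, bb_sq_eq_monomial' hi0⟩
    apply Red_single
    · exact ⟨i, two_mul i⟩
    · left; exact even_two

lemma adjoin_le_Rspan : Subalgebra.toSubmodule (Algebra.adjoin (ZMod 2) (Sset n))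
    ≤ Rspan n := by
  have h : Algebra.adjoin (ZMod 2) (Sset n) ≤ RsubAlg n :=
    Algebra.adjoin_le (Sset_sub_Rspan n)
  exact fun x hx => h hx

lemma monomial_single_mem_adjoin (v : VV) (k : ℕ) (h : Red n (Finsupp.single v k)) :
    (monomial (Finsupp.single v k) 1 : A2) ∈ Algebra.adjoin (ZMod 2) (Sset n) := by
  have hpow := two_pow_succ_even n
  rcases Nat.eq_zero_or_pos k with rfl | hk
  · rw [Finsupp.single_zero, monomial_zero']
    simp only [map_one]
    exact Subalgebra.one_mem _
  have hveven : Even v.val := by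
    rcases Nat.even_or_odd v.val with h' | h'
    · exact h'
    · exfalso
      obtain ⟨j, hj⟩ := h'
      have hv : v = Od j := Subtype.ext (by simp only [Od_val]; omega)
      have hb := h j
      rw [bad] at hb
      push_neg at hb
      have h0 := hb.1
      rw [← hv, Finsupp.single_apply, if_pos rfl] at h0
      omega
  obtain ⟨i, hi⟩ := hveven
  have hi1 : 0 < i := by have := v.2; omega
  have hvi : v = ⟨2*i, Nat.mul_pos two_pos hi1⟩ := Subtype.ext (show v.val = 2*i by omega)
  subst hvi
  have hXk : (monomial (Finsupp.single (⟨2*i, Nat.mul_pos two_pos hi1⟩ : VV) k) 1 : A2) = bb (2*i) ^ k := by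
    rw [bb, dif_pos (by omega : 0 < 2*i), X_pow_eq_monomial]
  rw [hXk]
  by_cases hsm : i < 2^n
  · exact pow_mem (Algebra.subset_adjoin
      (Set.mem_union_left _ (Set.mem_image_of_mem _ (show i ∈ {i | 0 < i ∧ i < 2^n} from ⟨hi1, hsm⟩)))) k
  · push_neg at hsm
    have hEv : (⟨2*i, Nat.mul_pos two_pos hi1⟩ : VV) = Ev n (i - 2^n) :=
      Subtype.ext (show 2*i = 2^(n+1) + 2*(i - 2^n) by omega)
    have hkeven : Even k := by
      have hb := h (i - 2^n)
      rw [bad] at hb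
      push_neg at hb
      have h2 := hb.2
      rw [← hEv, Finsupp.single_apply, if_pos rfl] at h2
      exact Nat.not_odd_iff_even.mp h2
    obtain ⟨m, hm⟩ := hkeven
    rw [show k = 2*m by omega, pow_mul]
    exact pow_mem (Algebra.subset_adjoin
      (Set.mem_union_right _ (Set.mem_image_of_mem _ (show i ∈ {i | 2^n ≤ i} from hsm)))) m

lemma red_split (v : VV) (k : ℕ) (f : VV →₀ ℕ) (hfv : f v = 0)
    (h : Red n (Finsupp.single v k + f)) :
    Red n (Finsupp.single v k) ∧ Red n f := by
  constructor <;> intro j <;> have hj := h j <;> rw [bad] at hj ⊢ <;> push_neg at hj <;>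
    push_neg <;>
    rw [Finsupp.add_apply, Finsupp.add_apply] at hj
  · constructor
    · have := hj.1; omega
    · have h2 := Nat.not_odd_iff_even.mp hj.2
      rw [Nat.not_odd_iff_even]
      by_cases hv : v = Ev n j
      · have hf0 : f (Ev n j) = 0 := hv ▸ hfv
        rw [hf0, add_zero] at h2
        exact h2
      · rw [Finsupp.single_apply, if_neg hv]
        exact Even.zero
  · constructor
    · have := hj.1; omega
    · have h2 := Nat.not_odd_iff_even.mp hj.2
      rw [Nat.not_odd_iff_even]
      by_cases hv : v = Ev n j
      · have hf0 : f (Ev n j) = 0 := by rw [← hv]; exact hfv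
        rw [hf0]
        exact Even.zero
      · rw [Finsupp.single_apply, if_neg hv, zero_add] at h2
        exact h2

lemma red_monomial_mem_adjoin : ∀ (a : VV →₀ ℕ), Red n a →
    (monomial a 1 : A2) ∈ Algebra.adjoin (ZMod 2) (Sset n) := by
  intro a
  induction a using Finsupp.induction with
  | zero =>
    intro _
    rw [monomial_zero']
    simp only [map_one]
    exact Subalgebra.one_mem _
  | single_add v k f hvf hk ih =>
    intro h
    have hfv : f v = 0 := Finsupp.notMem_support_iff.mp hvf
    obtain ⟨h1, h2⟩ := red_split n v k f hfv h
    have : (monomial (Finsupp.single v k + f) 1 : A2)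
        = monomial (Finsupp.single v k) 1 * monomial f 1 := by
      rw [monomial_mul, one_mul]
    rw [this]
    exact mul_mem (monomial_single_mem_adjoin n v k h1) (ih h2)

lemma Rspan_le_adjoin : Rspan n ≤ Subalgebra.toSubmodule (Algebra.adjoin (ZMod 2) (Sset n)) := by
  apply Submodule.span_le.mpr
  rintro x ⟨a, ha, rfl⟩
  exact red_monomial_mem_adjoin n a ha

lemma PPm_mem_Rspan (x : A2) : PPm n x ∈ Rspan n := by
  have hx : x ∈ Submodule.span (ZMod 2) (Set.range (basisMonomials VV (ZMod 2))) := by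
    rw [Module.Basis.span_eq]
    exact Submodule.mem_top
  induction hx using Submodule.span_induction with
  | mem z hz =>
    obtain ⟨a, rfl⟩ := hz
    rw [show (basisMonomials VV (ZMod 2)) a = monomial a 1 from by rw [coe_basisMonomials]]
    rw [PPm_mono, Pm]
    split_ifs with h
    · exact Submodule.subset_span ⟨a, h, rfl⟩
    · exact Submodule.zero_mem _
  | zero => rw [map_zero]; exact Submodule.zero_mem _
  | add y z _ _ hy hz => rw [map_add]; exact Submodule.add_mem _ hy hz
  | smul c y _ hy => rw [map_smul]; exact Submodule.smul_mem _ c hy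

lemma PPm_fix (x : A2) (hx : x ∈ Rspan n) : PPm n x = x := by
  induction hx using Submodule.span_induction with
  | mem z hz =>
    obtain ⟨a, ha, rfl⟩ := hz
    rw [PPm_mono, Pm_red n ha]
  | zero => rw [map_zero]
  | add y z _ _ hy hz => rw [map_add, hy, hz]
  | smul c y _ hy => rw [map_smul, hy]

end Span

section Final
variable (n : ℕ) (Q : A2 →ₗ[ZMod 2] A2)
  (hder : ∀ x y : A2, Q (x * y) = Q x * y + x * Q y)
  (heven : ∀ k : ℕ, 0 < k →
      Q (bb (2 * k)) =
        if 2 ^ (n + 1) ≤ 2 * k then bb (2 * k + 1 - 2 ^ (n + 1)) else 0)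
  (hodd : ∀ k : ℕ, Q (bb (2 * k + 1)) = 0)

include hder heven hodd in
lemma part2 : ∀ x ∈ Algebra.adjoin (ZMod 2) (Sset n), Q x = 0 := by
  intro x hx
  induction hx using Algebra.adjoin_induction with
  | mem z hz =>
    rcases hz with ⟨i, ⟨hi1, hi2⟩, rfl⟩ | ⟨i, hi, rfl⟩
    · rw [heven i hi1, if_neg]
      have hpow := two_pow_succ_even n
      omega
    · show Q (bb (2*i) ^ 2) = 0
      rw [pow_two, hder, mul_comm (Q (bb (2*i))) (bb (2*i)), char2_add_self]
  | algebraMap r =>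
    rw [Algebra.algebraMap_eq_smul_one, map_smul, Q_one Q hder, smul_zero]
  | add y z _ _ hy hz => rw [map_add, hy, hz, add_zero]
  | mul y z _ _ hy hz => rw [hder, hy, hz, zero_mul, mul_zero, add_zero]

include hder heven hodd in
lemma PPQ (x : A2) : PPm n (Q x) = 0 := by
  have hcomp : (PPm n) ∘ₗ Q = 0 := by
    apply Module.Basis.ext (basisMonomials VV (ZMod 2))
    intro a
    rw [show (basisMonomials VV (ZMod 2)) a = monomial a 1 from by rw [coe_basisMonomials]]
    rw [LinearMap.comp_apply,
      ML (Q := Q) (hder := hder) (n := n) (heven := heven) (hodd := hodd) a a.support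
        (subset_refl _), map_sum]
    rw [Finset.sum_eq_zero (fun v _ => PQT n a v)]
    rfl
  have := congrArg (fun f => f x) hcomp
  simpa using this

include hder heven hodd in
lemma part3 : Subalgebra.toSubmodule (Algebra.adjoin (ZMod 2) (Sset n))
    ⊓ LinearMap.range Q = ⊥ := by
  rw [eq_bot_iff]
  rintro x ⟨hx1, y, rfl⟩
  have hfix : PPm n (Q y) = Q y := PPm_fix n _ (adjoin_le_Rspan n hx1)
  rw [PPQ (Q := Q) (hder := hder) (n := n) (heven := heven) (hodd := hodd)] at hfix
  rw [← hfix]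
  exact Submodule.zero_mem ⊥

include hder heven hodd in
lemma K2E (x : A2) : Q (HHm n x) + HHm n (Q x) + PPm n x = x := by
  have hcomp : Q ∘ₗ (HHm n) + (HHm n) ∘ₗ Q + PPm n = LinearMap.id := by
    apply Module.Basis.ext (basisMonomials VV (ZMod 2))
    intro a
    rw [show (basisMonomials VV (ZMod 2)) a = monomial a 1 from by rw [coe_basisMonomials]]
    simp only [LinearMap.add_apply, LinearMap.comp_apply, LinearMap.id_apply]
    exact K2 (Q := Q) (hder := hder) (n := n) (heven := heven) (hodd := hodd) a
  have := congrArg (fun f => f x) hcomp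
  simpa using this

include hder heven hodd in
lemma part4 : LinearMap.ker Q ≤
    Subalgebra.toSubmodule (Algebra.adjoin (ZMod 2) (Sset n)) ⊔ LinearMap.range Q := by
  intro x hx
  have hx0 : Q x = 0 := hx
  have hid := K2E (Q := Q) (hder := hder) (n := n) (heven := heven) (hodd := hodd) x
  rw [hx0, map_zero, add_zero] at hid
  rw [Submodule.mem_sup]
  refine ⟨PPm n x, Rspan_le_adjoin n (PPm_mem_Rspan n x), Q (HHm n x), ⟨HHm n x, rfl⟩, ?_⟩
  rw [add_comm]
  exact hid

end Final

/-- Let `Q` be the 𝔽₂-linear derivation on `A = 𝔽₂[b_1,b_2,...]` with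
`Q(b_{2k}) = b_{2k+1-2^{n+1}}` when `2k ≥ 2^{n+1}`, `Q(b_{2k}) = 0` when `2k < 2^{n+1}`,
and `Q(b_odd) = 0`; then `Q² = 0` and the `Q`-homology of `A` is the polynomial algebra
`𝔽₂[b_2, b_4, ..., b_{2^{n+1}-2}] ⊗ 𝔽₂[b_{2i}² : i ≥ 2^n]`, i.e. the subalgebra
generated by `S = {b_{2i} : 0 < i < 2^n} ∪ {b_{2i}² : i ≥ 2^n}` maps isomorphically
onto `ker Q / im Q`, and `S` is algebraically independent. -/
theorem stmt2 (n : ℕ) (hn : 1 ≤ n) (Q : A2 →ₗ[ZMod 2] A2)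
    (hder : ∀ x y : A2, Q (x * y) = Q x * y + x * Q y)
    (hQ2 : ∀ x, Q (Q x) = 0)
    (heven : ∀ k : ℕ, 0 < k →
      Q (bb (2 * k)) =
        if 2 ^ (n + 1) ≤ 2 * k then bb (2 * k + 1 - 2 ^ (n + 1)) else 0)
    (hodd : ∀ k : ℕ, Q (bb (2 * k + 1)) = 0) :
    AlgebraicIndependent (ZMod 2)
      ((↑) : ((fun i => bb (2 * i)) '' {i | 0 < i ∧ i < 2 ^ n} ∪
              (fun i => bb (2 * i) ^ 2) '' {i | 2 ^ n ≤ i} : Set A2) → A2) ∧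
    (∀ x ∈ Algebra.adjoin (ZMod 2)
        ((fun i => bb (2 * i)) '' {i | 0 < i ∧ i < 2 ^ n} ∪
         (fun i => bb (2 * i) ^ 2) '' {i | 2 ^ n ≤ i}), Q x = 0) ∧
    Subalgebra.toSubmodule (Algebra.adjoin (ZMod 2)
        ((fun i => bb (2 * i)) '' {i | 0 < i ∧ i < 2 ^ n} ∪
         (fun i => bb (2 * i) ^ 2) '' {i | 2 ^ n ≤ i})) ⊓ LinearMap.range Q = ⊥ ∧
    LinearMap.ker Q ≤
      Subalgebra.toSubmodule (Algebra.adjoin (ZMod 2)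
        ((fun i => bb (2 * i)) '' {i | 0 < i ∧ i < 2 ^ n} ∪
         (fun i => bb (2 * i) ^ 2) '' {i | 2 ^ n ≤ i})) ⊔ LinearMap.range Q := by
  refine ⟨part1 n, ?_, ?_, ?_⟩
  · exact part2 (n := n) (Q := Q) (hder := hder) (heven := heven) (hodd := hodd)
  · exact part3 (n := n) (Q := Q) (hder := hder) (heven := heven) (hodd := hodd)
  · exact part4 (n := n) (Q := Q) (hder := hder) (heven := heven) (hodd := hodd)

end
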